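/- Let K be the stiffness matrix of a spring network in ℝ^d (d = 2 or 3) with a partition into terminals B and interior nodes I, let l_{ij} = l_{ji} be real perturbation coefficients with l_{ij} ≥ 0 whenever k_{ij} = 0, and let E be the matrix built from the coefficients l_{ij} by the same stiffness formula. For ε > 0 small enough that k_{ij} + εl_{ij} ≥ 0 for all i,j, let W(ε) = (K+εE)_BB − (K+εE)_BI ((K+εE)_II)† (K+εE)_IB be the static response matrix of the perturbed network. Then W(ε) converges to W = K_BB − K_BI K_II† K_IB as ε → 0⁺. -/

import Mathlib

open scoped BigOperators
open Matrix

noncomputable section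

/-- The Moore–Penrose pseudoinverse of a real square matrix, characterized by the
four Penrose conditions (it exists and is unique for every real matrix). -/
noncomputable def mpinv {n : Type*} [Fintype n] [DecidableEq n]
    (A : Matrix n n ℝ) : Matrix n n ℝ :=
  @dite _
    (∃ X : Matrix n n ℝ,
      A * X * A = A ∧ X * A * X = X ∧ (A * X)ᵀ = A * X ∧ (X * A)ᵀ = X * A)
    (Classical.propDecidable _) (fun h => h.choose) (fun _ => 0)

/-- Euclidean norm of a vector in `Fin d → ℝ`. -/
noncomputable def enorm {d : ℕ} (v : Fin d → ℝ) : ℝ := Real.sqrt (∑ a, v a ^ 2)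

/-- Unit vector pointing from `p` towards `q`. -/
noncomputable def unitDir {d : ℕ} (p q : Fin d → ℝ) : Fin d → ℝ :=
  fun a => (_root_.enorm (q - p))⁻¹ * (q a - p a)

/-- Stiffness matrix of a spring network with node positions `x` and spring
constants `k`: the `d × d` off-diagonal block coupling nodes `i ≠ j` is
`-k i j • n_{ij} n_{ij}ᵀ` and the `i`-th diagonal block is
`∑ j ≠ i, k i j • n_{ij} n_{ij}ᵀ`. -/
noncomputable def stiffness {d : ℕ} {ι : Type*} [Fintype ι] [DecidableEq ι]
    (x : ι → Fin d → ℝ) (k : ι → ι → ℝ) :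
    Matrix (ι × Fin d) (ι × Fin d) ℝ :=
  Matrix.of fun p q =>
    if p.1 = q.1 then
      ∑ j ∈ Finset.univ.filter (fun j => j ≠ p.1),
        k p.1 j * (unitDir (x p.1) (x j) p.2 * unitDir (x p.1) (x j) q.2)
    else
      -(k p.1 q.1 * (unitDir (x p.1) (x q.1) p.2 * unitDir (x p.1) (x q.1) q.2))

/-- `(x, k)` is a spring network: nodes are at distinct positions and the spring
constants are symmetric and nonnegative. -/
def IsSpringNetwork {d : ℕ} {ι : Type*} (x : ι → Fin d → ℝ) (k : ι → ι → ℝ) : Prop :=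
  Function.Injective x ∧ (∀ i j, k i j = k j i) ∧ (∀ i j, 0 ≤ k i j)

/-- The block of a matrix indexed by `(nodes × Fin d)` selected by the node
maps `f` and `g`. -/
def blk {d : ℕ} {ι κ₁ κ₂ : Type*} (K : Matrix (ι × Fin d) (ι × Fin d) ℝ)
    (f : κ₁ → ι) (g : κ₂ → ι) : Matrix (κ₁ × Fin d) (κ₂ × Fin d) ℝ :=
  K.submatrix (Prod.map f id) (Prod.map g id)

/-- Generalized Schur complement `K_BB - K_BI K_II† K_IB` eliminating the
interior nodes `I`. -/
noncomputable def schurResp {d : ℕ} {B I : Type*} [Fintype B] [Fintype I]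
    [DecidableEq B] [DecidableEq I]
    (K : Matrix ((B ⊕ I) × Fin d) ((B ⊕ I) × Fin d) ℝ) :
    Matrix (B × Fin d) (B × Fin d) ℝ :=
  blk K Sum.inl Sum.inl -
    blk K Sum.inl Sum.inr * mpinv (blk K Sum.inr Sum.inr) * blk K Sum.inr Sum.inl

/-- Static response matrix at the terminals `B` of the spring network `(x, k)`
with interior nodes `I`. -/
noncomputable def staticResponse {d : ℕ} {B I : Type*} [Fintype B] [Fintype I]
    [DecidableEq B] [DecidableEq I]
    (x : (B ⊕ I) → Fin d → ℝ) (k : (B ⊕ I) → (B ⊕ I) → ℝ) :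
    Matrix (B × Fin d) (B × Fin d) ℝ :=
  schurResp (stiffness x k)

/-- Balanced system of forces `f` supported at the points `x`: the total force
vanishes and the total torque vanishes (the torque being recorded as the
antisymmetric matrix `x_i ∧ f_i`, which for `d = 2` is equivalent to the scalar
wedge `u ∧ v = u 0 * v 1 - u 1 * v 0` and for `d = 3` to the cross product). -/
def IsBalanced {d : ℕ} {ι : Type*} [Fintype ι]
    (x f : ι → Fin d → ℝ) : Prop :=
  (∀ a, ∑ i, f i a = 0) ∧ ∀ a b, ∑ i, (x i a * f i b - x i b * f i a) = 0

/-- Planar wedge product. -/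
def wedge2 (u v : Fin 2 → ℝ) : ℝ := u 0 * v 1 - u 1 * v 0

/-- Cross product in `ℝ³`. -/
def cross3 (u v : Fin 3 → ℝ) : Fin 3 → ℝ :=
  ![u 1 * v 2 - u 2 * v 1, u 2 * v 0 - u 0 * v 2, u 0 * v 1 - u 1 * v 0]

/-- The `ε`-neighborhood `{y | dist (y, C) ≤ ε}` of a set `C` (for a closed set
`C`, membership is equivalent to being within Euclidean distance `ε` of some
point of `C`). -/
def epsNbhd {d : ℕ} (C : Set (Fin d → ℝ)) (ε : ℝ) : Set (Fin d → ℝ) :=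
  {y | ∃ z ∈ C, _root_.enorm (y - z) ≤ ε}

/-- Combine terminal and interior displacements into a displacement of all
nodes. -/
def glue {d : ℕ} {B I : Type*} (uB : B × Fin d → ℝ) (uI : I × Fin d → ℝ) :
    (B ⊕ I) × Fin d → ℝ :=
  fun p => Sum.elim (fun b => uB (b, p.2)) (fun i => uI (i, p.2)) p.1

/-- The reduced stiffness matrix `K̃` at the nodes `B ⊕ J` of a spring–mass
network with massless interior nodes `L`, obtained by eliminating `L`. -/
noncomputable def dynKtilde {d : ℕ} {B J L : Type*} [Fintype B] [Fintype J] [Fintype L]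
    [DecidableEq B] [DecidableEq J] [DecidableEq L]
    (x : ((B ⊕ J) ⊕ L) → Fin d → ℝ) (k : ((B ⊕ J) ⊕ L) → ((B ⊕ J) ⊕ L) → ℝ) :
    Matrix ((B ⊕ J) × Fin d) ((B ⊕ J) × Fin d) ℝ :=
  schurResp (stiffness x k)

/-- The diagonal mass matrix `M_JJ` of the interior nodes with mass. -/
noncomputable def massJJ {d : ℕ} {B J L : Type*} [Fintype J] [DecidableEq J]
    (m : (B ⊕ J) ⊕ L → ℝ) : Matrix (J × Fin d) (J × Fin d) ℝ :=
  Matrix.diagonal fun p => m (Sum.inl (Sum.inr p.1))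

/-- The diagonal mass matrix `M_BB` of the terminal nodes. -/
noncomputable def massBB {d : ℕ} {B J L : Type*} [Fintype B] [DecidableEq B]
    (m : (B ⊕ J) ⊕ L → ℝ) : Matrix (B × Fin d) (B × Fin d) ℝ :=
  Matrix.diagonal fun p => m (Sum.inl (Sum.inl p.1))

/-- Dynamic response function
`W(ω) = K̃_BB - ω² M_BB - K̃_BJ (K̃_JJ - ω² M_JJ)⁻¹ K̃_JB` of a spring–mass
network with terminals `B`, interior nodes `J` carrying the masses `m` and
massless interior nodes `L`. -/
noncomputable def dynResponse {d : ℕ} {B J L : Type*} [Fintype B] [Fintype J] [Fintype L]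
    [DecidableEq B] [DecidableEq J] [DecidableEq L]
    (x : ((B ⊕ J) ⊕ L) → Fin d → ℝ) (k : ((B ⊕ J) ⊕ L) → ((B ⊕ J) ⊕ L) → ℝ)
    (m : (B ⊕ J) ⊕ L → ℝ) (ω : ℝ) : Matrix (B × Fin d) (B × Fin d) ℝ :=
  blk (dynKtilde x k) Sum.inl Sum.inl - ω ^ 2 • massBB m -
    blk (dynKtilde x k) Sum.inl Sum.inr *
      (blk (dynKtilde x k) Sum.inr Sum.inr - ω ^ 2 • massJJ m)⁻¹ *
      blk (dynKtilde x k) Sum.inr Sum.inl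


section Pinv
variable {n : Type*} [Fintype n] [DecidableEq n]

def IsPinv (A X : Matrix n n ℝ) : Prop :=
  A * X * A = A ∧ X * A * X = X ∧ (A * X)ᵀ = A * X ∧ (X * A)ᵀ = X * A

omit [DecidableEq n] in
theorem IsPinv.unique {A X Y : Matrix n n ℝ} (hX : IsPinv A X) (hY : IsPinv A Y) : X = Y := by
  obtain ⟨hX1, hX2, hX3, hX4⟩ := hX
  obtain ⟨hY1, hY2, hY3, hY4⟩ := hY
  have hAX : A * X = A * Y := by
    calc A * X = (A * X)ᵀ := hX3.symm
    _ = Xᵀ * Aᵀ := by rw [Matrix.transpose_mul]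
    _ = Xᵀ * (A * Y * A)ᵀ := by rw [hY1]
    _ = (A * X)ᵀ * (A * Y)ᵀ := by simp only [Matrix.transpose_mul]; noncomm_ring
    _ = (A * X) * (A * Y) := by rw [hX3, hY3]
    _ = (A * X * A) * Y := by noncomm_ring
    _ = A * Y := by rw [hX1]
  have hXA : X * A = Y * A := by
    calc X * A = (X * A)ᵀ := hX4.symm
    _ = Aᵀ * Xᵀ := by rw [Matrix.transpose_mul]
    _ = (A * Y * A)ᵀ * Xᵀ := by rw [hY1]
    _ = (Y * A)ᵀ * (X * A)ᵀ := by simp only [Matrix.transpose_mul]; noncomm_ring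
    _ = (Y * A) * (X * A) := by rw [hX4, hY4]
    _ = Y * (A * X * A) := by noncomm_ring
    _ = Y * A := by rw [hX1]
  calc X = X * A * X := hX2.symm
  _ = X * (A * Y) := by rw [Matrix.mul_assoc, hAX]
  _ = (X * A) * Y := by rw [Matrix.mul_assoc]
  _ = Y * A * Y := by rw [hXA]
  _ = Y := hY2

theorem mpinv_isPinv {A : Matrix n n ℝ} (h : ∃ X, IsPinv A X) : IsPinv A (mpinv A) := by
  have h' : (∃ X : Matrix n n ℝ,
      A * X * A = A ∧ X * A * X = X ∧ (A * X)ᵀ = A * X ∧ (X * A)ᵀ = X * A) := h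
  rw [mpinv, dif_pos h']
  exact h'.choose_spec

theorem exists_pinv_of_symm {A : Matrix n n ℝ} (hA : Aᵀ = A) :
    ∃ X : Matrix n n ℝ, IsPinv A X ∧ Xᵀ = X ∧
      ∀ b : n → ℝ, (∀ z, A *ᵥ z = 0 → b ⬝ᵥ z = 0) → A *ᵥ (X *ᵥ b) = b := by
  have hH : A.IsHermitian := by
    rw [Matrix.IsHermitian, Matrix.conjTranspose_eq_transpose_of_trivial, hA]
  set U : Matrix n n ℝ := (hH.eigenvectorUnitary : Matrix n n ℝ) with hU
  set μ : n → ℝ := hH.eigenvalues with hμ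
  have hUU : Uᵀ * U = 1 := by
    have := Unitary.coe_star_mul_self hH.eigenvectorUnitary
    rwa [Matrix.star_eq_conjTranspose, Matrix.conjTranspose_eq_transpose_of_trivial] at this
  have hUU' : U * Uᵀ = 1 := by
    have := Unitary.coe_mul_star_self hH.eigenvectorUnitary
    rwa [Unitary.coe_star, Matrix.star_eq_conjTranspose,
      Matrix.conjTranspose_eq_transpose_of_trivial] at this
  have hspec : A = U * Matrix.diagonal μ * Uᵀ := by
    have := hH.spectral_theorem
    rwa [Unitary.conjStarAlgAut_apply, Matrix.star_eq_conjTranspose, Matrix.conjTranspose_eq_transpose_of_trivial,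
      show (RCLike.ofReal ∘ hH.eigenvalues : n → ℝ) = μ from funext fun i => rfl] at this
  have key : ∀ f g : n → ℝ, (U * Matrix.diagonal f * Uᵀ) * (U * Matrix.diagonal g * Uᵀ)
      = U * Matrix.diagonal (fun i => f i * g i) * Uᵀ := by
    intro f g
    have h1 : (U * Matrix.diagonal f * Uᵀ) * (U * Matrix.diagonal g * Uᵀ)
        = U * Matrix.diagonal f * (Uᵀ * U) * (Matrix.diagonal g * Uᵀ) := by
      simp only [Matrix.mul_assoc]
    rw [h1, hUU, Matrix.mul_one, Matrix.mul_assoc, ← Matrix.mul_assoc (Matrix.diagonal f),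
      Matrix.diagonal_mul_diagonal, ← Matrix.mul_assoc]
  have keyT : ∀ f : n → ℝ, (U * Matrix.diagonal f * Uᵀ)ᵀ = U * Matrix.diagonal f * Uᵀ := by
    intro f
    simp [Matrix.transpose_mul, Matrix.diagonal_transpose, Matrix.mul_assoc]
  set ν : n → ℝ := fun i => (μ i)⁻¹ with hν
  have hμν : ∀ i, μ i * ν i * μ i = μ i := by
    intro i; rcases eq_or_ne (μ i) 0 with h | h <;> simp [hν, h]
  have hνμ : ∀ i, ν i * μ i * ν i = ν i := by
    intro i; rcases eq_or_ne (μ i) 0 with h | h <;> simp [hν, h]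
  refine ⟨U * Matrix.diagonal ν * Uᵀ, ⟨?_, ?_, ?_, ?_⟩, keyT ν, ?_⟩
  · rw [hspec, key, key]
    exact congrArg (fun q : n → ℝ => U * Matrix.diagonal q * Uᵀ) (funext hμν)
  · rw [hspec, key, key]
    exact congrArg (fun q : n → ℝ => U * Matrix.diagonal q * Uᵀ) (funext hνμ)
  · rw [hspec, key, keyT]
  · rw [hspec, key, keyT]
  · intro b hb
    have hc0 : ∀ i, μ i = 0 → (Uᵀ *ᵥ b) i = 0 := by
      intro i hi
      have hz : A *ᵥ (U *ᵥ Pi.single i 1) = 0 := by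
        rw [Matrix.mulVec_mulVec, hspec]
        have h2 : U * Matrix.diagonal μ * Uᵀ * U = U * Matrix.diagonal μ := by
          rw [Matrix.mul_assoc, hUU, Matrix.mul_one]
        rw [h2, ← Matrix.mulVec_mulVec]
        have h3 : Matrix.diagonal μ *ᵥ Pi.single i 1 = 0 := by
          ext j
          rw [Matrix.mulVec_diagonal]
          rcases eq_or_ne j i with rfl | hji
          · simp [hi]
          · simp [Pi.single_eq_of_ne hji]
        rw [h3, Matrix.mulVec_zero]
      have hbz := hb _ hz
      rw [Matrix.dotProduct_mulVec, dotProduct_single, mul_one] at hbz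
      rw [Matrix.mulVec_transpose]
      exact hbz
    rw [Matrix.mulVec_mulVec, hspec, key]
    have hsplit : (U * Matrix.diagonal (fun i => μ i * ν i) * Uᵀ) *ᵥ b
        = U *ᵥ (Matrix.diagonal (fun i => μ i * ν i) *ᵥ (Uᵀ *ᵥ b)) := by
      rw [Matrix.mulVec_mulVec, Matrix.mulVec_mulVec]
    rw [hsplit]
    have hdiag : Matrix.diagonal (fun i => μ i * ν i) *ᵥ (Uᵀ *ᵥ b) = Uᵀ *ᵥ b := by
      ext j
      rw [Matrix.mulVec_diagonal]
      rcases eq_or_ne (μ j) 0 with h | h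
      · rw [hc0 j h, mul_zero]
      · rw [hν]
        field_simp
    rw [hdiag, Matrix.mulVec_mulVec, hUU', Matrix.one_mulVec]
end Pinv


section PinvSpec
variable {n : Type*} [Fintype n] [DecidableEq n]

theorem mpinv_symm_spec {A : Matrix n n ℝ} (hA : Aᵀ = A) :
    IsPinv A (mpinv A) ∧ (mpinv A)ᵀ = mpinv A ∧
      ∀ b : n → ℝ, (∀ z, A *ᵥ z = 0 → b ⬝ᵥ z = 0) → A *ᵥ (mpinv A *ᵥ b) = b := by
  obtain ⟨X, hX, hXT, hr⟩ := exists_pinv_of_symm hA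
  have h1 := mpinv_isPinv ⟨X, hX⟩
  have h2 : mpinv A = X := h1.unique hX
  rw [h2]
  exact ⟨hX, hXT, hr⟩
end PinvSpec

section Core
variable {m n : Type*} [Fintype m] [Fintype n] [DecidableEq m] [DecidableEq n]

noncomputable def schurB (M : Matrix (m ⊕ n) (m ⊕ n) ℝ) : Matrix m m ℝ :=
  M.toBlocks₁₁ - M.toBlocks₁₂ * mpinv M.toBlocks₂₂ * M.toBlocks₂₁

theorem toBlocks22_symm {M : Matrix (m ⊕ n) (m ⊕ n) ℝ} (hM : Mᵀ = M) :
    (M.toBlocks₂₂)ᵀ = M.toBlocks₂₂ := by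
  ext i j
  exact congrFun (congrFun hM (Sum.inr i)) (Sum.inr j)

theorem toBlocks11_symm {M : Matrix (m ⊕ n) (m ⊕ n) ℝ} (hM : Mᵀ = M) :
    (M.toBlocks₁₁)ᵀ = M.toBlocks₁₁ := by
  ext i j
  exact congrFun (congrFun hM (Sum.inl i)) (Sum.inl j)

theorem toBlocks12_symm {M : Matrix (m ⊕ n) (m ⊕ n) ℝ} (hM : Mᵀ = M) :
    (M.toBlocks₁₂)ᵀ = M.toBlocks₂₁ := by
  ext i j
  exact (congrFun (congrFun hM (Sum.inl j)) (Sum.inr i)).symm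

theorem schurB_symm {M : Matrix (m ⊕ n) (m ⊕ n) ℝ} (hM : Mᵀ = M) :
    (schurB M)ᵀ = schurB M := by
  have hX := mpinv_symm_spec (toBlocks22_symm hM)
  rw [schurB, Matrix.transpose_sub, toBlocks11_symm hM]
  congr 1
  rw [Matrix.transpose_mul, Matrix.transpose_mul, hX.2.1, ← toBlocks12_symm hM,
    Matrix.transpose_transpose, toBlocks12_symm hM, Matrix.mul_assoc]

theorem schur_var {M : Matrix (m ⊕ n) (m ⊕ n) ℝ} (hM : Mᵀ = M)
    (hPSD : ∀ w, 0 ≤ w ⬝ᵥ M *ᵥ w) (u : m → ℝ) :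
    (∀ v, u ⬝ᵥ schurB M *ᵥ u ≤ Sum.elim u v ⬝ᵥ M *ᵥ Sum.elim u v) ∧
    (∃ v, u ⬝ᵥ schurB M *ᵥ u = Sum.elim u v ⬝ᵥ M *ᵥ Sum.elim u v) := by
  set A := M.toBlocks₁₁ with hA
  set Bm := M.toBlocks₁₂ with hBm
  set C := M.toBlocks₂₁ with hC
  set D := M.toBlocks₂₂ with hD
  have hDs : Dᵀ = D := toBlocks22_symm hM
  have hBC : Bmᵀ = C := toBlocks12_symm hM
  obtain ⟨hPin, hXT, hrange⟩ := mpinv_symm_spec hDs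
  set X := mpinv D with hXdef
  set b := C *ᵥ u with hb
  -- the quadratic form via blocks
  have hq : ∀ (w : m → ℝ) (v : n → ℝ), Sum.elim w v ⬝ᵥ M *ᵥ Sum.elim w v
      = w ⬝ᵥ A *ᵥ w + w ⬝ᵥ Bm *ᵥ v + v ⬝ᵥ C *ᵥ w + v ⬝ᵥ D *ᵥ v := by
    intro w v
    conv_lhs => rw [← Matrix.fromBlocks_toBlocks M]
    rw [Matrix.fromBlocks_mulVec, sumElim_dotProduct_sumElim,
      dotProduct_add, dotProduct_add]
    simp only [Sum.elim_comp_inl, Sum.elim_comp_inr]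
    rw [← hA, ← hBm, ← hC, ← hD]
    ring
  -- PSD of blocks
  have hApsd : 0 ≤ u ⬝ᵥ A *ᵥ u := by
    have := hPSD (Sum.elim u 0)
    rw [hq] at this
    simpa using this
  have hDpsd : ∀ v, 0 ≤ v ⬝ᵥ D *ᵥ v := by
    intro v
    have := hPSD (Sum.elim 0 v)
    rw [hq] at this
    simpa using this
  -- transpose moves
  have hBu : ∀ w : n → ℝ, u ⬝ᵥ Bm *ᵥ w = b ⬝ᵥ w := by
    intro w
    rw [Matrix.dotProduct_mulVec, hb, ← Matrix.mulVec_transpose, hBC]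
  have hDdot : ∀ (w w' : n → ℝ), w ⬝ᵥ D *ᵥ w' = (D *ᵥ w) ⬝ᵥ w' := by
    intro w w'
    rw [Matrix.dotProduct_mulVec, ← Matrix.mulVec_transpose, hDs]
  -- b is orthogonal to ker D
  have hbker : ∀ z, D *ᵥ z = 0 → b ⬝ᵥ z = 0 := by
    intro z hz
    set a := u ⬝ᵥ A *ᵥ u with ha
    set c := b ⬝ᵥ z with hcdef
    have hquad : ∀ t : ℝ, 0 ≤ t ^ 2 * a + 2 * t * c := by
      intro t
      have := hPSD (Sum.elim (t • u) z)
      rw [hq] at this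
      have e1 : (t • u) ⬝ᵥ A *ᵥ (t • u) = t ^ 2 * a := by
        rw [smul_dotProduct, Matrix.mulVec_smul, dotProduct_smul]
        simp [ha]; ring
      have e2 : (t • u) ⬝ᵥ Bm *ᵥ z = t * c := by
        rw [smul_dotProduct, hBu]
        simp [hcdef]
      have e3 : z ⬝ᵥ C *ᵥ (t • u) = t * c := by
        rw [Matrix.mulVec_smul, dotProduct_smul, ← hb,
          dotProduct_comm, ← hcdef]
        simp
      have e4 : z ⬝ᵥ D *ᵥ z = 0 := by rw [hz, dotProduct_zero]
      rw [e1, e2, e3, e4] at this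
      linarith
    by_contra hc
    have ha1 : (0:ℝ) < a + 1 := by linarith
    have h := hquad (-(c) / (a + 1))
    have hc2 : 0 < c ^ 2 := by positivity
    have key : (-(c) / (a + 1)) ^ 2 * a + 2 * (-(c) / (a + 1)) * c
        = (c ^ 2 * a - 2 * c ^ 2 * (a + 1)) / (a + 1) ^ 2 := by
      field_simp
      ring
    rw [key] at h
    have h2 : 0 ≤ c ^ 2 * a - 2 * c ^ 2 * (a + 1) := by
      have hne : ((a : ℝ) + 1) ^ 2 ≠ 0 := by positivity
      have := mul_nonneg h (sq_nonneg (a + 1))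
      rwa [div_mul_cancel₀ _ hne] at this
    nlinarith
  have hDXb : D *ᵥ (X *ᵥ b) = b := hrange b hbker
  -- Schur value
  have hschur : u ⬝ᵥ schurB M *ᵥ u = u ⬝ᵥ A *ᵥ u - b ⬝ᵥ (X *ᵥ b) := by
    rw [schurB, Matrix.sub_mulVec, dotProduct_sub]
    congr 1
    rw [← Matrix.mulVec_mulVec, ← Matrix.mulVec_mulVec, hBu, ← hb, ← hXdef]
  -- the key expansion
  have expand : ∀ v : n → ℝ, Sum.elim u v ⬝ᵥ M *ᵥ Sum.elim u v
      = u ⬝ᵥ schurB M *ᵥ u + (v + X *ᵥ b) ⬝ᵥ D *ᵥ (v + X *ᵥ b) := by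
    intro v
    rw [hq, hschur]
    have e1 : u ⬝ᵥ Bm *ᵥ v = b ⬝ᵥ v := hBu v
    have e2 : v ⬝ᵥ C *ᵥ u = b ⬝ᵥ v := by rw [← hb, dotProduct_comm]
    have e3 : (v + X *ᵥ b) ⬝ᵥ D *ᵥ (v + X *ᵥ b)
        = v ⬝ᵥ D *ᵥ v + v ⬝ᵥ b + b ⬝ᵥ v + (X *ᵥ b) ⬝ᵥ b := by
      rw [Matrix.mulVec_add, dotProduct_add, add_dotProduct,
        add_dotProduct, hDXb]
      have e4 : (X *ᵥ b) ⬝ᵥ D *ᵥ v = b ⬝ᵥ v := by rw [hDdot, hDXb]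
      rw [e4]
      ring
    rw [e1, e2, e3]
    have e5 : b ⬝ᵥ X *ᵥ b = (X *ᵥ b) ⬝ᵥ b := dotProduct_comm _ _
    have e6 : v ⬝ᵥ b = b ⬝ᵥ v := dotProduct_comm _ _
    rw [e5, e6]
    ring
  constructor
  · intro v
    rw [expand v]
    have := hDpsd (v + X *ᵥ b)
    linarith
  · refine ⟨-(X *ᵥ b), ?_⟩
    rw [expand]
    simp
end Core

section Stiff
variable {d : ℕ} {ι : Type*} [Fintype ι] [DecidableEq ι]

theorem unitDir_swap (p q : Fin d → ℝ) (a : Fin d) :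
    unitDir q p a = -unitDir p q a := by
  have he : _root_.enorm (p - q) = _root_.enorm (q - p) := by
    unfold _root_.enorm
    congr 1
    refine Finset.sum_congr rfl fun a _ => ?_
    have : (p - q) a = -((q - p) a) := by simp only [Pi.sub_apply]; ring
    rw [this]
    ring
  unfold unitDir
  rw [he]
  ring

theorem stiffness_symm (x : ι → Fin d → ℝ) (k : ι → ι → ℝ)
    (hk : ∀ i j, k i j = k j i) : (stiffness x k)ᵀ = stiffness x k := by
  ext ⟨i, a⟩ ⟨j, b⟩
  rw [Matrix.transpose_apply]
  show stiffness x k (j, b) (i, a) = stiffness x k (i, a) (j, b)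
  unfold stiffness
  rcases eq_or_ne i j with rfl | hij
  · simp only [Matrix.of_apply, if_pos rfl, if_true]
    exact Finset.sum_congr rfl fun j' _ => by ring
  · simp only [Matrix.of_apply, if_neg hij, if_neg (Ne.symm hij)]
    rw [hk j i, unitDir_swap (x i) (x j), unitDir_swap (x i) (x j)]
    ring

theorem stiffness_add_smul (x : ι → Fin d → ℝ) (k l : ι → ι → ℝ) (ε : ℝ) :
    stiffness x k + ε • stiffness x l = stiffness x (fun i j => k i j + ε * l i j) := by
  ext ⟨i, a⟩ ⟨j, b⟩
  show stiffness x k (i,a) (j,b) + ε * stiffness x l (i,a) (j,b) = _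
  unfold stiffness
  rcases eq_or_ne i j with rfl | hij
  · simp only [Matrix.of_apply, if_pos rfl, if_true]
    rw [Finset.mul_sum, ← Finset.sum_add_distrib]
    exact Finset.sum_congr rfl fun j' _ => by ring
  · simp only [Matrix.of_apply, if_neg hij]
    ring

theorem stiffness_psd (x : ι → Fin d → ℝ) (k : ι → ι → ℝ)
    (hk : ∀ i j, k i j = k j i) (hk0 : ∀ i j, 0 ≤ k i j)
    (w : ι × Fin d → ℝ) : 0 ≤ w ⬝ᵥ stiffness x k *ᵥ w := by
  classical
  set s : ι → ι → ℝ := fun i j => ∑ a, unitDir (x i) (x j) a * w (i, a) with hs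
  set t : ι → ι → ℝ := fun i j => ∑ a, unitDir (x i) (x j) a * w (j, a) with ht
  set g : ι → ι → ℝ := fun i j => k i j * (s i j * (s i j - t i j)) with hg
  have inner : ∀ (i : ι) (a : Fin d), (stiffness x k *ᵥ w) (i, a)
      = ∑ j ∈ Finset.univ.filter (fun j => j ≠ i), k i j * unitDir (x i) (x j) a * (s i j - t i j) := by
    intro i a
    show (∑ q : ι × Fin d, stiffness x k (i, a) q * w q) = _
    rw [Fintype.sum_prod_type]
    rw [← Finset.sum_filter_add_sum_filter_not Finset.univ (fun j => j = i)]
    have hfe : Finset.univ.filter (fun j => j = i) = {i} := by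
      ext j; simp
    have h1 : ∑ j ∈ Finset.univ.filter (fun j => j = i), ∑ b, stiffness x k (i,a) (j,b) * w (j,b)
        = ∑ j ∈ Finset.univ.filter (fun j => j ≠ i), k i j * unitDir (x i) (x j) a * s i j := by
      rw [hfe, Finset.sum_singleton]
      have : ∀ b, stiffness x k (i,a) (i,b) = ∑ j ∈ Finset.univ.filter (fun j => j ≠ i),
          k i j * (unitDir (x i) (x j) a * unitDir (x i) (x j) b) := fun b => if_pos rfl
      rw [Finset.sum_congr rfl fun b _ => by rw [this b, Finset.sum_mul]]
      rw [Finset.sum_comm]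
      refine Finset.sum_congr rfl fun j _ => ?_
      rw [hs, Finset.mul_sum]
      refine Finset.sum_congr rfl fun b _ => by ring
    have h2 : ∑ j ∈ Finset.univ.filter (fun j => ¬ j = i), ∑ b, stiffness x k (i,a) (j,b) * w (j,b)
        = ∑ j ∈ Finset.univ.filter (fun j => j ≠ i), -(k i j * unitDir (x i) (x j) a * t i j) := by
      refine Finset.sum_congr rfl fun j hj => ?_
      have hji : j ≠ i := by simpa using hj
      have : ∀ b, stiffness x k (i,a) (j,b)
          = -(k i j * (unitDir (x i) (x j) a * unitDir (x i) (x j) b)) := fun b => if_neg (Ne.symm hji)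
      rw [Finset.sum_congr rfl fun b _ => by rw [this b]]
      rw [ht, Finset.mul_sum, ← Finset.sum_neg_distrib]
      refine Finset.sum_congr rfl fun b _ => by ring
    rw [h1, h2, ← Finset.sum_add_distrib]
    refine Finset.sum_congr rfl fun j _ => by ring
  have main : w ⬝ᵥ stiffness x k *ᵥ w
      = ∑ i, ∑ j ∈ Finset.univ.filter (fun j => j ≠ i), g i j := by
    show (∑ p : ι × Fin d, w p * (stiffness x k *ᵥ w) p) = _
    rw [Fintype.sum_prod_type]
    refine Finset.sum_congr rfl fun i _ => ?_
    calc ∑ a, w (i, a) * (stiffness x k *ᵥ w) (i, a)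
        = ∑ a, ∑ j ∈ Finset.univ.filter (fun j => j ≠ i),
            w (i, a) * (k i j * unitDir (x i) (x j) a * (s i j - t i j)) := by
          refine Finset.sum_congr rfl fun a _ => ?_
          rw [inner i a, Finset.mul_sum]
      _ = ∑ j ∈ Finset.univ.filter (fun j => j ≠ i), ∑ a,
            w (i, a) * (k i j * unitDir (x i) (x j) a * (s i j - t i j)) := Finset.sum_comm
      _ = ∑ j ∈ Finset.univ.filter (fun j => j ≠ i), g i j := by
          refine Finset.sum_congr rfl fun j _ => ?_
          show _ = k i j * (s i j * (s i j - t i j))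
          have hsij : s i j = ∑ a, unitDir (x i) (x j) a * w (i, a) := by rw [hs]
          conv_rhs => rw [hsij, Finset.sum_mul, Finset.mul_sum]
          refine Finset.sum_congr rfl fun a _ => by ring
  have swap_s : ∀ i j, s j i = -t i j := by
    intro i j
    show (∑ a, unitDir (x j) (x i) a * w (j, a)) = -(∑ a, unitDir (x i) (x j) a * w (j, a))
    rw [← Finset.sum_neg_distrib]
    refine Finset.sum_congr rfl fun a _ => ?_
    rw [unitDir_swap]
    ring
  have swap_t : ∀ i j, t j i = -s i j := by
    intro i j
    show (∑ a, unitDir (x j) (x i) a * w (i, a)) = -(∑ a, unitDir (x i) (x j) a * w (i, a))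
    rw [← Finset.sum_neg_distrib]
    refine Finset.sum_congr rfl fun a _ => ?_
    rw [unitDir_swap]
    ring
  have pair : ∀ i j, g i j + g j i = k i j * (s i j - t i j) ^ 2 := by
    intro i j
    show k i j * (s i j * (s i j - t i j)) + k j i * (s j i * (s j i - t j i)) = _
    rw [swap_s i j, swap_t i j, hk j i]
    ring
  have hswap : (∑ i, ∑ j ∈ Finset.univ.filter (fun j => j ≠ i), g j i)
      = ∑ i, ∑ j ∈ Finset.univ.filter (fun j => j ≠ i), g i j := by
    refine Finset.sum_comm' fun i j => ?_
    constructor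
    · rintro ⟨-, hj⟩
      simp only [Finset.mem_filter, Finset.mem_univ, true_and] at hj ⊢
      exact ⟨Ne.symm hj, trivial⟩
    · rintro ⟨hi, -⟩
      simp only [Finset.mem_filter, Finset.mem_univ, true_and] at hi ⊢
      exact Ne.symm hi
  have hdouble : (∑ i, ∑ j ∈ Finset.univ.filter (fun j => j ≠ i), g i j)
      + (∑ i, ∑ j ∈ Finset.univ.filter (fun j => j ≠ i), g i j)
      = ∑ i, ∑ j ∈ Finset.univ.filter (fun j => j ≠ i), k i j * (s i j - t i j) ^ 2 := by
    nth_rewrite 2 [← hswap]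
    rw [← Finset.sum_add_distrib]
    refine Finset.sum_congr rfl fun i _ => ?_
    rw [← Finset.sum_add_distrib]
    exact Finset.sum_congr rfl fun j _ => pair i j
  have hnn : 0 ≤ ∑ i, ∑ j ∈ Finset.univ.filter (fun j => j ≠ i), k i j * (s i j - t i j) ^ 2 :=
    Finset.sum_nonneg fun i _ => Finset.sum_nonneg fun j _ =>
      mul_nonneg (hk0 i j) (sq_nonneg _)
  rw [main]
  linarith [hdouble ▸ hnn]
end Stiff

section FinalHelpers
variable {m n : Type*} [Fintype m] [Fintype n] [DecidableEq m] [DecidableEq n]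
-- polarization entry formula
theorem sym_entry {S : Matrix m m ℝ} (hS : Sᵀ = S) (p q : m) :
    S p q = ((Pi.single p 1 + Pi.single q 1) ⬝ᵥ S *ᵥ (Pi.single p 1 + Pi.single q 1)
      - Pi.single p 1 ⬝ᵥ S *ᵥ Pi.single p 1 - Pi.single q 1 ⬝ᵥ S *ᵥ Pi.single q 1) / 2 := by
  have hpq : S p q = S q p := congrFun (congrFun hS q) p
  simp only [Matrix.mulVec_single, add_dotProduct, dotProduct_add,
    Matrix.mulVec_add, single_dotProduct, mul_one, one_mul, MulOpposite.op_one, one_smul,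
    Matrix.col_apply]
  linarith
end FinalHelpers

section CoreTendsto
variable {m n : Type*} [Fintype m] [Fintype n] [DecidableEq m] [DecidableEq n]

theorem core_tendsto (M0 Es : Matrix (m ⊕ n) (m ⊕ n) ℝ) (hM0 : M0ᵀ = M0) (hEs : Esᵀ = Es)
    (ε₀ : ℝ) (hε₀ : 0 < ε₀)
    (hpsd : ∀ ε : ℝ, 0 ≤ ε → ε ≤ ε₀ → ∀ w, 0 ≤ w ⬝ᵥ (M0 + ε • Es) *ᵥ w) :
    Filter.Tendsto (fun ε : ℝ => schurB (M0 + ε • Es)) (nhdsWithin 0 (Set.Ioi 0))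
      (nhds (schurB M0)) := by
  have h0 : M0 + (0:ℝ) • Es = M0 := by simp
  have hMsym : ∀ ε : ℝ, (M0 + ε • Es)ᵀ = M0 + ε • Es := by
    intro ε
    rw [Matrix.transpose_add, Matrix.transpose_smul, hM0, hEs]
  have haff : ∀ (ε : ℝ) (w : m ⊕ n → ℝ),
      w ⬝ᵥ (M0 + ε • Es) *ᵥ w = w ⬝ᵥ M0 *ᵥ w + ε * (w ⬝ᵥ Es *ᵥ w) := by
    intro ε w
    rw [Matrix.add_mulVec, dotProduct_add, Matrix.smul_mulVec,
      dotProduct_smul, smul_eq_mul]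
  -- quadratic-form convergence
  have hQtend : ∀ u : m → ℝ,
      Filter.Tendsto (fun ε : ℝ => u ⬝ᵥ schurB (M0 + ε • Es) *ᵥ u) (nhdsWithin 0 (Set.Ioi 0))
        (nhds (u ⬝ᵥ schurB (M0 + (0:ℝ) • Es) *ᵥ u)) := by
    intro u
    have hvar : ∀ ε : ℝ, 0 ≤ ε → ε ≤ ε₀ →
        (∀ v, u ⬝ᵥ schurB (M0 + ε • Es) *ᵥ u
            ≤ Sum.elim u v ⬝ᵥ (M0 + ε • Es) *ᵥ Sum.elim u v) ∧
        (∃ v, u ⬝ᵥ schurB (M0 + ε • Es) *ᵥ u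
            = Sum.elim u v ⬝ᵥ (M0 + ε • Es) *ᵥ Sum.elim u v) :=
      fun ε h1 h2 => schur_var (hMsym ε) (hpsd ε h1 h2) u
    set Q : ℝ → ℝ := fun ε => u ⬝ᵥ schurB (M0 + ε • Es) *ᵥ u with hQ
    set r : (n → ℝ) → ℝ := fun v => Sum.elim u v ⬝ᵥ Es *ᵥ Sum.elim u v with hr
    set q0 : (n → ℝ) → ℝ := fun v => Sum.elim u v ⬝ᵥ M0 *ᵥ Sum.elim u v with hq0
    obtain ⟨v0, hv0⟩ := (hvar 0 le_rfl hε₀.le).2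
    have hv0' : Q 0 = q0 v0 + 0 * r v0 := by rw [hQ, hq0, hr]; simpa [haff 0] using hv0
    set C2 : ℝ := (Q ε₀ - Q 0) / ε₀ with hC2
    have hlow : ∀ ε ∈ Set.Ioc (0:ℝ) ε₀, Q 0 + ε * C2 ≤ Q ε := by
      rintro ε ⟨hε1, hε2⟩
      obtain ⟨vε, hvε⟩ := (hvar ε hε1.le hε2).2
      have hQε : Q ε = q0 vε + ε * r vε := by simp only [hQ, hq0, hr]; rw [hvε, haff]
      have h1 : Q 0 ≤ q0 vε + 0 * r vε := by
        have := (hvar 0 le_rfl hε₀.le).1 vε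
        rw [haff] at this
        exact this
      have h2 : Q ε₀ ≤ q0 vε + ε₀ * r vε := by
        have := (hvar ε₀ hε₀.le le_rfl).1 vε
        rw [haff] at this
        exact this
      have ht0 : 0 ≤ ε / ε₀ := div_nonneg hε1.le hε₀.le
      have ht1 : ε / ε₀ ≤ 1 := div_le_one_of_le₀ hε2 hε₀.le
      have htε : ε / ε₀ * ε₀ = ε := div_mul_cancel₀ _ hε₀.ne'
      have hC2' : ε * C2 = ε / ε₀ * (Q ε₀ - Q 0) := by rw [hC2]; ring
      have hA' : ε / ε₀ * Q ε₀ ≤ ε / ε₀ * q0 vε + ε * r vε := by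
        calc ε / ε₀ * Q ε₀ ≤ ε / ε₀ * (q0 vε + ε₀ * r vε) :=
              mul_le_mul_of_nonneg_left h2 ht0
        _ = ε / ε₀ * q0 vε + (ε / ε₀ * ε₀) * r vε := by ring
        _ = ε / ε₀ * q0 vε + ε * r vε := by rw [htε]
      have hB' : (1 - ε / ε₀) * Q 0 ≤ (1 - ε / ε₀) * q0 vε := by
        have := mul_le_mul_of_nonneg_left h1 (sub_nonneg.2 ht1)
        simpa using this
      rw [hQε, hC2']
      nlinarith [hA', hB']
    have hupp : ∀ ε ∈ Set.Ioc (0:ℝ) ε₀, Q ε ≤ Q 0 + ε * r v0 := by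
      rintro ε ⟨hε1, hε2⟩
      have := (hvar ε hε1.le hε2).1 v0
      rw [haff] at this
      have h3 : q0 v0 = Q 0 := by rw [hv0']; ring
      rw [hQ]
      calc u ⬝ᵥ schurB (M0 + ε • Es) *ᵥ u ≤ q0 v0 + ε * r v0 := this
      _ = Q 0 + ε * r v0 := by rw [h3]
    have hmem : Set.Ioc (0:ℝ) ε₀ ∈ nhdsWithin (0:ℝ) (Set.Ioi 0) :=
      Ioc_mem_nhdsGT hε₀
    have hLt : Filter.Tendsto (fun ε : ℝ => Q 0 + ε * C2) (nhdsWithin 0 (Set.Ioi 0)) (nhds (Q 0)) := by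
      have : Filter.Tendsto (fun ε : ℝ => Q 0 + ε * C2) (nhds 0) (nhds (Q 0 + 0 * C2)) :=
        (continuous_const.add (continuous_id.mul continuous_const)).tendsto 0
      rw [zero_mul, add_zero] at this
      exact this.mono_left nhdsWithin_le_nhds
    have hUt : Filter.Tendsto (fun ε : ℝ => Q 0 + ε * r v0) (nhdsWithin 0 (Set.Ioi 0)) (nhds (Q 0)) := by
      have : Filter.Tendsto (fun ε : ℝ => Q 0 + ε * r v0) (nhds 0) (nhds (Q 0 + 0 * r v0)) :=
        (continuous_const.add (continuous_id.mul continuous_const)).tendsto 0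
      rw [zero_mul, add_zero] at this
      exact this.mono_left nhdsWithin_le_nhds
    exact tendsto_of_tendsto_of_tendsto_of_le_of_le' hLt hUt
      (Filter.mem_of_superset hmem fun ε hε => hlow ε hε)
      (Filter.mem_of_superset hmem fun ε hε => hupp ε hε)
  -- entrywise convergence
  have hsym : ∀ ε : ℝ, (schurB (M0 + ε • Es))ᵀ = schurB (M0 + ε • Es) :=
    fun ε => schurB_symm (hMsym ε)
  have key : ∀ p q : m, Filter.Tendsto (fun ε : ℝ => schurB (M0 + ε • Es) p q)
      (nhdsWithin 0 (Set.Ioi 0)) (nhds (schurB (M0 + (0:ℝ) • Es) p q)) := by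
    intro p q
    have hrw : ∀ ε : ℝ, schurB (M0 + ε • Es) p q
        = (((Pi.single p 1 + Pi.single q 1) ⬝ᵥ schurB (M0 + ε • Es) *ᵥ
              (Pi.single p 1 + Pi.single q 1))
          - Pi.single p 1 ⬝ᵥ schurB (M0 + ε • Es) *ᵥ Pi.single p 1
          - Pi.single q 1 ⬝ᵥ schurB (M0 + ε • Es) *ᵥ Pi.single q 1) / 2 :=
      fun ε => sym_entry (hsym ε) p q
    simp only [hrw]
    exact (((hQtend _).sub (hQtend _)).sub (hQtend _)).div_const 2
  have final : Filter.Tendsto (fun ε : ℝ => schurB (M0 + ε • Es)) (nhdsWithin 0 (Set.Ioi 0))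
      (nhds (schurB (M0 + (0:ℝ) • Es))) :=
    tendsto_pi_nhds.2 fun p => tendsto_pi_nhds.2 fun q => key p q
  rwa [h0] at final
end CoreTendsto

/-- stability of the static response: the response of the
perturbed network `K + εE` converges to the response of the unperturbed network
as `ε → 0⁺`. -/
theorem static_response_stability {d : ℕ} (hd : d = 2 ∨ d = 3)
    {B I : Type*} [Fintype B] [Fintype I] [DecidableEq B] [DecidableEq I]
    (x : (B ⊕ I) → Fin d → ℝ) (k l : (B ⊕ I) → (B ⊕ I) → ℝ)
    (hnet : IsSpringNetwork x k)
    (hlsymm : ∀ i j, l i j = l j i)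
    (hlnew : ∀ i j, k i j = 0 → 0 ≤ l i j) :
    Filter.Tendsto (fun ε : ℝ => schurResp (stiffness x k + ε • stiffness x l))
      (nhdsWithin 0 (Set.Ioi 0))
      (nhds (schurResp (stiffness x k))) := by
  classical
  obtain ⟨-, hksymm, hk0⟩ := hnet
  set e : (B ⊕ I) × Fin d ≃ (B × Fin d) ⊕ (I × Fin d) := Equiv.sumProdDistrib B I (Fin d)
    with he
  -- choice of ε₀
  set P : Finset ((B ⊕ I) × (B ⊕ I)) := Finset.univ.filter (fun p => l p.1 p.2 < 0) with hP
  set ε₀ : ℝ := if h : P.Nonempty then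
      min 1 (P.inf' h (fun p => k p.1 p.2 / (-(l p.1 p.2)))) else 1 with hε₀def
  have hPneg : ∀ p ∈ P, l p.1 p.2 < 0 := by
    intro p hp
    rw [hP, Finset.mem_filter] at hp
    exact hp.2
  have hkpos : ∀ p ∈ P, 0 < k p.1 p.2 := by
    intro p hp
    rcases (hk0 p.1 p.2).lt_or_eq with h | h
    · exact h
    · exact absurd (hlnew p.1 p.2 h.symm) (not_le.2 (hPneg p hp))
  have hε₀pos : 0 < ε₀ := by
    rw [hε₀def]
    split_ifs with h
    · refine lt_min one_pos ?_
      rw [Finset.lt_inf'_iff]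
      intro p hp
      exact div_pos (hkpos p hp) (neg_pos.2 (hPneg p hp))
    · exact one_pos
  have hknn : ∀ ε : ℝ, 0 ≤ ε → ε ≤ ε₀ → ∀ i j, 0 ≤ k i j + ε * l i j := by
    intro ε hε1 hε2 i j
    rcases lt_or_ge (l i j) 0 with hl | hl
    · have hpmem : ((i, j) : (B ⊕ I) × (B ⊕ I)) ∈ P := by
        rw [hP, Finset.mem_filter]
        exact ⟨Finset.mem_univ _, hl⟩
      have hle : ε₀ ≤ k i j / (-(l i j)) := by
        rw [hε₀def, dif_pos ⟨(i, j), hpmem⟩]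
        exact le_trans (min_le_right _ _) (Finset.inf'_le _ hpmem)
      have hε3 : ε ≤ k i j / (-(l i j)) := le_trans hε2 hle
      have hlp : 0 < -(l i j) := neg_pos.2 hl
      have hmul := (le_div_iff₀ hlp).1 hε3
      nlinarith
    · have := mul_nonneg hε1 hl
      linarith [hk0 i j]
  -- reindexed matrices
  set M0 : Matrix ((B × Fin d) ⊕ (I × Fin d)) ((B × Fin d) ⊕ (I × Fin d)) ℝ :=
    (stiffness x k).submatrix ⇑e.symm ⇑e.symm with hM0def
  set Es : Matrix ((B × Fin d) ⊕ (I × Fin d)) ((B × Fin d) ⊕ (I × Fin d)) ℝ :=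
    (stiffness x l).submatrix ⇑e.symm ⇑e.symm with hEsdef
  have hbridge : ∀ K' : Matrix ((B ⊕ I) × Fin d) ((B ⊕ I) × Fin d) ℝ,
      schurResp K' = schurB (K'.submatrix ⇑e.symm ⇑e.symm) := by
    intro K'
    have h11 : (K'.submatrix ⇑e.symm ⇑e.symm).toBlocks₁₁ = blk K' Sum.inl Sum.inl := by
      ext ⟨b1, a⟩ ⟨b2, c⟩; rfl
    have h12 : (K'.submatrix ⇑e.symm ⇑e.symm).toBlocks₁₂ = blk K' Sum.inl Sum.inr := by
      ext ⟨b1, a⟩ ⟨b2, c⟩; rfl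
    have h21 : (K'.submatrix ⇑e.symm ⇑e.symm).toBlocks₂₁ = blk K' Sum.inr Sum.inl := by
      ext ⟨b1, a⟩ ⟨b2, c⟩; rfl
    have h22 : (K'.submatrix ⇑e.symm ⇑e.symm).toBlocks₂₂ = blk K' Sum.inr Sum.inr := by
      ext ⟨b1, a⟩ ⟨b2, c⟩; rfl
    unfold schurResp schurB
    rw [h11, h12, h21, h22]
  have hsub : ∀ ε : ℝ, (stiffness x k + ε • stiffness x l).submatrix ⇑e.symm ⇑e.symm
      = M0 + ε • Es := by
    intro ε
    ext p q
    rfl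
  have hM0symm : M0ᵀ = M0 := by
    rw [hM0def, Matrix.transpose_submatrix, stiffness_symm x k hksymm]
  have hEssymm : Esᵀ = Es := by
    rw [hEsdef, Matrix.transpose_submatrix, stiffness_symm x l hlsymm]
  have hpsd : ∀ ε : ℝ, 0 ≤ ε → ε ≤ ε₀ → ∀ w, 0 ≤ w ⬝ᵥ (M0 + ε • Es) *ᵥ w := by
    intro ε h1 h2 w
    rw [← hsub ε]
    set K' := stiffness x k + ε • stiffness x l with hK'
    have base : ∀ w', 0 ≤ w' ⬝ᵥ K' *ᵥ w' := by
      intro w'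
      rw [hK', stiffness_add_smul]
      refine stiffness_psd x _ (fun i j => by rw [hksymm i j, hlsymm i j]) ?_ w'
      exact fun i j => hknn ε h1 h2 i j
    have hmv : (K'.submatrix ⇑e.symm ⇑e.symm) *ᵥ w = (K' *ᵥ (w ∘ ⇑e)) ∘ ⇑e.symm := by
      have := Matrix.submatrix_mulVec_equiv K' w (⇑e.symm) e.symm
      simpa using this
    rw [hmv]
    have hdot : w ⬝ᵥ ((K' *ᵥ (w ∘ ⇑e)) ∘ ⇑e.symm) = (w ∘ ⇑e) ⬝ᵥ (K' *ᵥ (w ∘ ⇑e)) := by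
      rw [dotProduct, dotProduct,
        ← Equiv.sum_comp e (fun p => w p * ((K' *ᵥ (w ∘ ⇑e)) ∘ ⇑e.symm) p)]
      refine Finset.sum_congr rfl fun q _ => ?_
      simp
    rw [hdot]
    exact base _
  have hcore := core_tendsto M0 Es hM0symm hEssymm ε₀ hε₀pos hpsd
  have hfun : (fun ε : ℝ => schurResp (stiffness x k + ε • stiffness x l))
      = fun ε : ℝ => schurB (M0 + ε • Es) := funext fun ε => by rw [hbridge, hsub]
  have hlim : schurResp (stiffness x k) = schurB M0 := hbridge (stiffness x k)
  rw [hfun, hlim]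
  exact hcore
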